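/- Suppose X = {x1,…,xn} ⊂ S^{m−1} with positive weights w1,…,wn satisfies ∑ᵢ wᵢ f(xᵢ) = ∫_{S^{m−1}} f dρ for every homogeneous polynomial f of degree q (q even), where ρ is the normalized surface measure. Then with c_q = ∫_{S^{m−1}} y1^q ρ(dy) and rᵢ = (wᵢ/c_q)^{1/q} xᵢ, the identity ⟨x,x⟩^{q/2} = ∑_{i=1}^n ⟨x,rᵢ⟩^q holds for all x ∈ ℝᵐ. -/

import Mathlib

open Finset MeasureTheory MvPolynomial

/-- A cubature formula of index `q` on the sphere `S^{m-1}` (with respect to the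
normalized rotation-invariant surface measure `ρ`) yields the Hilbert identity
`⟨x,x⟩^{q/2} = ∑ᵢ ⟨x,rᵢ⟩^q`, where `rᵢ = (wᵢ/c_q)^{1/q}·xᵢ` and
`c_q = ∫ y₁^q dρ`. -/
theorem cubature_to_hilbert_identity (m n q : ℕ) (hm : 0 < m) (hq : Even q)
    (hq0 : 0 < q)
    (ρ : Measure (EuclideanSpace ℝ (Fin m))) [IsProbabilityMeasure ρ]
    (hsph : ∀ᵐ y ∂ρ, ‖y‖ = 1)
    (hinv : ∀ g : EuclideanSpace ℝ (Fin m) ≃ₗᵢ[ℝ] EuclideanSpace ℝ (Fin m),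
      ρ.map g = ρ)
    (x : Fin n → EuclideanSpace ℝ (Fin m)) (hx : ∀ i, ‖x i‖ = 1)
    (w : Fin n → ℝ) (hw : ∀ i, 0 < w i)
    (hcub : ∀ f : MvPolynomial (Fin m) ℝ, f.IsHomogeneous q →
      ∑ i, w i * MvPolynomial.eval (fun j => x i j) f =
        ∫ y, MvPolynomial.eval (fun j => y j) f ∂ρ) :
    ∀ z : EuclideanSpace ℝ (Fin m),
      (inner ℝ z z : ℝ) ^ (q / 2) =
        ∑ i, (inner ℝ z
            (((w i / ∫ y, (y ⟨0, hm⟩) ^ q ∂ρ) ^ ((q : ℝ)⁻¹)) • x i) : ℝ) ^ q := by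
  set c : ℝ := ∫ y, (y ⟨0, hm⟩) ^ q ∂ρ with hc
  set e0 : EuclideanSpace ℝ (Fin m) := EuclideanSpace.single ⟨0, hm⟩ 1 with he0
  have he0norm : ‖e0‖ = 1 := by simp [he0]
  -- key: rotation invariance gives ∫ ⟪v,y⟫^q = c * ‖v‖^q
  have key : ∀ v : EuclideanSpace ℝ (Fin m),
      ∫ y, (inner ℝ v y : ℝ) ^ q ∂ρ = c * ‖v‖ ^ q := by
    intro v
    rcases eq_or_ne v 0 with rfl | hv
    · simp [hq0.ne', inner_zero_left]
    · set u : EuclideanSpace ℝ (Fin m) := ‖v‖⁻¹ • v with hu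
      have hun : ‖u‖ = 1 := by
        simp [hu, norm_smul, abs_of_nonneg (inv_nonneg.2 (norm_nonneg v)),
          inv_mul_cancel₀ (norm_ne_zero_iff.2 hv)]
      set g : EuclideanSpace ℝ (Fin m) ≃ₗᵢ[ℝ] EuclideanSpace ℝ (Fin m) :=
        Submodule.reflection (ℝ ∙ (u - e0))ᗮ with hg
      have hgu : g u = e0 := Submodule.reflection_sub (by rw [hun, he0norm])
      have hmap : ρ.map g = ρ := hinv g
      have hemb : MeasurableEmbedding (g : EuclideanSpace ℝ (Fin m) → EuclideanSpace ℝ (Fin m)) :=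
        g.toHomeomorph.measurableEmbedding
      have step1 : ∫ y, (inner ℝ u y : ℝ) ^ q ∂ρ = c := by
        calc ∫ y, (inner ℝ u y : ℝ) ^ q ∂ρ
            = ∫ y, (inner ℝ u y : ℝ) ^ q ∂(ρ.map g) := by rw [hmap]
          _ = ∫ y, (inner ℝ u (g y) : ℝ) ^ q ∂ρ := hemb.integral_map _
          _ = ∫ y, (inner ℝ e0 y : ℝ) ^ q ∂ρ := by
              congr 1; funext y
              have h2 : (inner ℝ (g (g u)) (g y) : ℝ) = inner ℝ (g u) y := g.inner_map_map (g u) y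
              rw [hg, Submodule.reflection_reflection, ← hg, hgu] at h2
              rw [h2]
          _ = c := by
              rw [hc]; congr 1; funext y
              rw [he0, EuclideanSpace.inner_single_left]
              simp
      have hv' : v = ‖v‖ • u := by
        rw [hu, smul_smul, mul_inv_cancel₀ (norm_ne_zero_iff.2 hv), one_smul]
      calc ∫ y, (inner ℝ v y : ℝ) ^ q ∂ρ
          = ∫ y, ‖v‖ ^ q * (inner ℝ u y : ℝ) ^ q ∂ρ := by
            congr 1; funext y
            rw [hv']
            rw [real_inner_smul_left, mul_pow]
            simp [norm_smul, hun]
        _ = ‖v‖ ^ q * ∫ y, (inner ℝ u y : ℝ) ^ q ∂ρ := integral_const_mul _ _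
        _ = c * ‖v‖ ^ q := by rw [step1, mul_comm]
  -- cubature applied to ⟪v,·⟫^q
  have key2 : ∀ v : EuclideanSpace ℝ (Fin m),
      ∑ i, w i * (inner ℝ v (x i) : ℝ) ^ q = c * ‖v‖ ^ q := by
    intro v
    have hhom : ((∑ j, C (v j) * X j : MvPolynomial (Fin m) ℝ) ^ q).IsHomogeneous q := by
      have h1 : (∑ j, C (v j) * X j : MvPolynomial (Fin m) ℝ).IsHomogeneous 1 :=
        IsHomogeneous.sum _ _ _ fun j _ => (isHomogeneous_X ℝ j).C_mul (v j)
      simpa using h1.pow q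
    have := hcub _ hhom
    have heval : ∀ y : EuclideanSpace ℝ (Fin m),
        MvPolynomial.eval (fun j => y j) ((∑ j, C (v j) * X j : MvPolynomial (Fin m) ℝ) ^ q)
          = (inner ℝ v y : ℝ) ^ q := by
      intro y
      rw [map_pow, map_sum]
      congr 1
      rw [PiLp.inner_apply]
      simp [RCLike.inner_apply, mul_comm]
    rw [show (∑ i, w i * MvPolynomial.eval (fun j => x i j)
        ((∑ j, C (v j) * X j : MvPolynomial (Fin m) ℝ) ^ q)) =
        ∑ i, w i * (inner ℝ v (x i) : ℝ) ^ q from by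
          exact Finset.sum_congr rfl fun i _ => by rw [heval]] at this
    rw [this]
    rw [show (fun y : EuclideanSpace ℝ (Fin m) => MvPolynomial.eval (fun j => y j)
        ((∑ j, C (v j) * X j : MvPolynomial (Fin m) ℝ) ^ q)) =
        fun y => (inner ℝ v y : ℝ) ^ q from funext heval]
    exact key v
  -- sum of weights is 1, hence n ≠ 0
  have hwsum : ∑ i, w i = 1 := by
    obtain ⟨k, hk⟩ := hq
    have hq2 : q / 2 = k := by omega
    have hhom : ((∑ j, (X j : MvPolynomial (Fin m) ℝ) ^ 2) ^ k).IsHomogeneous q := by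
      have h2 : (∑ j, (X j : MvPolynomial (Fin m) ℝ) ^ 2).IsHomogeneous 2 :=
        IsHomogeneous.sum _ _ _ fun j _ => by simpa using (isHomogeneous_X ℝ j).pow 2
      have := h2.pow k
      rwa [show 2 * k = q by omega] at this
    have heval : ∀ y : EuclideanSpace ℝ (Fin m),
        MvPolynomial.eval (fun j => y j) ((∑ j, (X j : MvPolynomial (Fin m) ℝ) ^ 2) ^ k)
          = (∑ j, (y j) ^ 2) ^ k := by
      intro y; rw [map_pow, map_sum]; simp
    have hns : ∀ y : EuclideanSpace ℝ (Fin m), (∑ j, (y j) ^ 2) = ‖y‖ ^ 2 := by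
      intro y
      rw [EuclideanSpace.norm_eq, Real.sq_sqrt (Finset.sum_nonneg fun j _ => sq_nonneg _)]
      simp [sq]
    have := hcub _ hhom
    have hrhs : (∫ y, MvPolynomial.eval (fun j => y j)
        ((∑ j, (X j : MvPolynomial (Fin m) ℝ) ^ 2) ^ k) ∂ρ) = 1 := by
      rw [show (fun y : EuclideanSpace ℝ (Fin m) => MvPolynomial.eval (fun j => y j)
          ((∑ j, (X j : MvPolynomial (Fin m) ℝ) ^ 2) ^ k)) = fun y => (∑ j, (y j) ^ 2) ^ k from
        funext heval]
      rw [integral_congr_ae (g := fun _ => (1:ℝ)) ?_, integral_const]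
      · simp
      · filter_upwards [hsph] with y hy
        rw [hns y, hy]; simp
    rw [hrhs] at this
    rw [← this]
    refine Finset.sum_congr rfl fun i _ => ?_
    rw [heval, hns, hx i]
    simp
  have hn : 0 < n := by
    by_contra h
    push_neg at h
    interval_cases n
    simp at hwsum
  have i0 : Fin n := ⟨0, hn⟩
  -- positivity of c
  have hcpos : 0 < c := by
    have h1 := key2 (x i0)
    rw [hx i0, one_pow, mul_one] at h1
    have hterm0 : w i0 * (inner ℝ (x i0) (x i0) : ℝ) ^ q = w i0 := by
      rw [real_inner_self_eq_norm_sq, hx i0]; simp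
    have hle : w i0 * (inner ℝ (x i0) (x i0) : ℝ) ^ q ≤ ∑ i, w i * (inner ℝ (x i0) (x i) : ℝ) ^ q :=
      Finset.single_le_sum (f := fun i => w i * (inner ℝ (x i0) (x i) : ℝ) ^ q)
        (fun i _ => mul_nonneg (hw i).le (hq.pow_nonneg _)) (mem_univ i0)
    rw [h1, hterm0] at hle
    exact lt_of_lt_of_le (hw i0) hle
  intro z
  have hterm : ∀ i, (inner ℝ z (((w i / c) ^ ((q : ℝ)⁻¹)) • x i) : ℝ) ^ q
      = (w i / c) * (inner ℝ z (x i) : ℝ) ^ q := by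
    intro i
    rw [real_inner_smul_right, mul_pow]
    congr 1
    rw [← Real.rpow_natCast ((w i / c) ^ ((q:ℝ)⁻¹)) q, ← Real.rpow_mul
      (div_nonneg (hw i).le hcpos.le), inv_mul_cancel₀ (by exact_mod_cast hq0.ne'), Real.rpow_one]
  calc (inner ℝ z z : ℝ) ^ (q / 2)
      = ‖z‖ ^ q := by
        rw [real_inner_self_eq_norm_sq, ← pow_mul]
        obtain ⟨k, hk⟩ := hq
        congr 1
        omega
    _ = c⁻¹ * (c * ‖z‖ ^ q) := by
        rw [← mul_assoc, inv_mul_cancel₀ hcpos.ne', one_mul]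
    _ = c⁻¹ * ∑ i, w i * (inner ℝ z (x i) : ℝ) ^ q := by rw [key2 z]
    _ = ∑ i, (w i / c) * (inner ℝ z (x i) : ℝ) ^ q := by
        rw [Finset.mul_sum]
        exact Finset.sum_congr rfl fun i _ => by ring
    _ = ∑ i, (inner ℝ z (((w i / c) ^ ((q : ℝ)⁻¹)) • x i) : ℝ) ^ q := by
        exact Finset.sum_congr rfl fun i _ => (hterm i).symm
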